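/- arXiv:1403.3868 — 11 statements merged into one kernel-verified Lean document; each statement's English description precedes it below -/
import Mathlib

section
/- Let G be a finite group. The number of ordered triples (a,b,c) of elements of G satisfying abc = cba equals |G|^2 times the number of conjugacy classes of G. Consequently the probability that abc = cba for uniformly random a,b,c in G equals k(G)/|G|, the same as the commuting probability. -/
private lemma key {G : Type*} [Group G] (a b c : G) :
    a * b * c = c * b * a ↔ Commute (a * b) (a * c⁻¹) := by
  unfold Commute SemiconjBy
  constructor <;> intro h
  · have h2 : a * c⁻¹ * (a * b) = a * c⁻¹ * (a * b * c) * c⁻¹ := by group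
    rw [h2, h]
    group
  · have h2 : c * a⁻¹ * (a * b * (a * c⁻¹)) * c = c * a⁻¹ * (a * c⁻¹ * (a * b)) * c := by
      rw [h]
    calc a * b * c = c * a⁻¹ * (a * c⁻¹ * (a * b)) * c := by group
      _ = c * a⁻¹ * (a * b * (a * c⁻¹)) * c := h2.symm
      _ = c * b * a := by group

theorem stmt3 {G : Type*} [Group G] [Fintype G] :
    Nat.card {t : G × G × G // t.1 * t.2.1 * t.2.2 = t.2.2 * t.2.1 * t.1} =
      Nat.card G ^ 2 * Nat.card (ConjClasses G) ∧
    (Nat.card {t : G × G × G // t.1 * t.2.1 * t.2.2 = t.2.2 * t.2.1 * t.1} : ℚ) /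
        (Nat.card G) ^ 3 =
      (Nat.card (ConjClasses G) : ℚ) / Nat.card G := by
  have e : {t : G × G × G // t.1 * t.2.1 * t.2.2 = t.2.2 * t.2.1 * t.1} ≃
      G × { p : G × G // Commute p.1 p.2 } :=
    { toFun := fun t => (t.val.1, ⟨(t.val.1 * t.val.2.1, t.val.1 * t.val.2.2⁻¹),
        (key _ _ _).mp t.prop⟩)
      invFun := fun p => ⟨(p.1, p.1⁻¹ * p.2.val.1, p.2.val.2⁻¹ * p.1),
        (key _ _ _).mpr (by
          have h := p.2.prop
          simpa [mul_assoc] using h)⟩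
      left_inv := fun t => by
        obtain ⟨⟨a, b, c⟩, h⟩ := t
        simp [mul_assoc]
      right_inv := fun p => by
        obtain ⟨a, ⟨⟨x, y⟩, h⟩⟩ := p
        simp [mul_assoc] }
  have hcard : Nat.card {t : G × G × G // t.1 * t.2.1 * t.2.2 = t.2.2 * t.2.1 * t.1} =
      Nat.card G ^ 2 * Nat.card (ConjClasses G) := by
    rw [Nat.card_congr e, Nat.card_prod, card_comm_eq_card_conjClasses_mul_card]
    ring
  refine ⟨hcard, ?_⟩
  have hG : (0 : ℚ) < (Nat.card G : ℚ) := by exact_mod_cast Nat.card_pos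
  rw [hcard]
  push_cast
  field_simp
end

section
/- Let G be a finite group. For every non-identity permutation π of {1,2,3}, the probability that a_1 a_2 a_3 = a_{π(1)} a_{π(2)} a_{π(3)} for uniformly random a_1, a_2, a_3 in G equals k(G)/|G|, where k(G) is the number of conjugacy classes of G. -/
theorem card_aux_stmt4 {G : Type*} [Group G] [Fintype G] (P : (Fin 3 → G) → Prop)
    (f : (Fin 3 → G) → (G × G) × G) (g : (G × G) × G → Fin 3 → G)
    (hgf : ∀ a, P a → g (f a) = a) (hfg : ∀ p, f (g p) = p)
    (hPg : ∀ p : (G × G) × G, Commute p.1.1 p.1.2 → P (g p))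
    (hPf : ∀ a, P a → Commute (f a).1.1 (f a).1.2) :
    Nat.card {a : Fin 3 → G // P a} =
      Nat.card (ConjClasses G) * Nat.card G * Nat.card G := by
  rw [← card_comm_eq_card_conjClasses_mul_card, ← Nat.card_prod]
  exact Nat.card_congr
    { toFun := fun a => (⟨(f a.1).1, hPf a.1 a.2⟩, (f a.1).2)
      invFun := fun p => ⟨g ((p.1.1, p.2)), hPg _ p.1.2⟩
      left_inv := fun a => Subtype.ext (hgf a.1 a.2)
      right_inv := fun p => by
        obtain ⟨⟨c, hc⟩, x⟩ := p
        have h := hfg (c, x)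
        simp only [Prod.mk.injEq, Subtype.mk.injEq]
        exact ⟨congrArg Prod.fst h, congrArg Prod.snd h⟩ }

theorem stmt4 {G : Type*} [Group G] [Fintype G] (π : Equiv.Perm (Fin 3)) (hπ : π ≠ 1) :
    (Nat.card {a : Fin 3 → G // a 0 * a 1 * a 2 = a (π 0) * a (π 1) * a (π 2)} : ℚ) /
        (Nat.card G) ^ 3 =
      (Nat.card (ConjClasses G) : ℚ) / Nat.card G := by
  have h3 : ∀ x : Fin 3, x = 0 ∨ x = 1 ∨ x = 2 := by decide
  have hinj : ∀ i j : Fin 3, i ≠ j → π i = π j → False :=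
    fun i j hij h => hij (π.injective h)
  have key : Nat.card {a : Fin 3 → G // a 0 * a 1 * a 2 = a (π 0) * a (π 1) * a (π 2)}
      = Nat.card (ConjClasses G) * Nat.card G * Nat.card G := by
    rcases h3 (π 0) with h0 | h0 | h0 <;> rcases h3 (π 1) with h1 | h1 | h1 <;>
      rcases h3 (π 2) with h2 | h2 | h2 <;> rw [h0, h1, h2]
    all_goals try exact absurd (h0.trans h1.symm) (fun h => hinj 0 1 (by decide) h)
    all_goals try exact absurd (h0.trans h2.symm) (fun h => hinj 0 2 (by decide) h)
    all_goals try exact absurd (h1.trans h2.symm) (fun h => hinj 1 2 (by decide) h)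
    -- remaining: (0,1,2) identity, (0,2,1), (1,0,2), (1,2,0), (2,0,1), (2,1,0)
    · exact absurd (Equiv.ext fun x => by fin_cases x <;> simp_all) hπ
    · -- (0,2,1) : Commute (a 1) (a 2)
      exact card_aux_stmt4 _ (fun a => ((a 1, a 2), a 0))
        (fun p => ![p.2, p.1.1, p.1.2])
        (fun a _ => by funext i; fin_cases i <;> simp)
        (fun p => by simp)
        (fun p hc => by
          show p.2 * p.1.1 * p.1.2 = p.2 * p.1.2 * p.1.1
          rw [mul_assoc, mul_assoc, hc.eq])
        (fun a ha => by
          have h' : a 0 * (a 1 * a 2) = a 0 * (a 2 * a 1) := by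
            rw [← mul_assoc, ← mul_assoc]; exact ha
          exact mul_left_cancel h')
    · -- (1,0,2) : Commute (a 0) (a 1)
      exact card_aux_stmt4 _ (fun a => ((a 0, a 1), a 2))
        (fun p => ![p.1.1, p.1.2, p.2])
        (fun a _ => by funext i; fin_cases i <;> simp)
        (fun p => by simp)
        (fun p hc => by
          show p.1.1 * p.1.2 * p.2 = p.1.2 * p.1.1 * p.2
          rw [hc.eq])
        (fun a ha => by
          have h' : a 0 * a 1 = a 1 * a 0 := mul_right_cancel ha
          exact h')
    · -- (1,2,0) : Commute (a 0) (a 1 * a 2)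
      exact card_aux_stmt4 _ (fun a => ((a 0, a 1 * a 2), a 1))
        (fun p => ![p.1.1, p.2, p.2⁻¹ * p.1.2])
        (fun a _ => by funext i; fin_cases i <;> simp)
        (fun p => by simp)
        (fun p hc => by
          show p.1.1 * p.2 * (p.2⁻¹ * p.1.2) = p.2 * (p.2⁻¹ * p.1.2) * p.1.1
          simp only [mul_assoc, mul_inv_cancel_left, inv_mul_cancel_left]
          exact hc.eq)
        (fun a ha => by
          show a 0 * (a 1 * a 2) = a 1 * a 2 * a 0
          rw [← mul_assoc]; exact ha)
    · -- (2,0,1) : Commute (a 0 * a 1) (a 2)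
      exact card_aux_stmt4 _ (fun a => ((a 0 * a 1, a 2), a 0))
        (fun p => ![p.2, p.2⁻¹ * p.1.1, p.1.2])
        (fun a _ => by funext i; fin_cases i <;> simp)
        (fun p => by simp)
        (fun p hc => by
          show p.2 * (p.2⁻¹ * p.1.1) * p.1.2 = p.1.2 * p.2 * (p.2⁻¹ * p.1.1)
          simp only [mul_assoc, mul_inv_cancel_left, inv_mul_cancel_left]
          first
            | exact hc.eq
            | rw [← mul_assoc, ← mul_assoc, hc.eq])
        (fun a ha => by
          show a 0 * a 1 * a 2 = a 2 * (a 0 * a 1)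
          rw [ha]; exact mul_assoc _ _ _)
    · -- (2,1,0) : Commute (a 0 * a 1) (a 2 * (a 0)⁻¹)
      exact card_aux_stmt4 _ (fun a => ((a 0 * a 1, a 2 * (a 0)⁻¹), a 0))
        (fun p => ![p.2, p.2⁻¹ * p.1.1, p.1.2 * p.2])
        (fun a _ => by funext i; fin_cases i <;> simp)
        (fun p => by simp)
        (fun p hc => by
          show p.2 * (p.2⁻¹ * p.1.1) * (p.1.2 * p.2)
              = p.1.2 * p.2 * (p.2⁻¹ * p.1.1) * p.2
          simp only [mul_assoc, mul_inv_cancel_left, inv_mul_cancel_left]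
          first
            | exact hc.eq
            | rw [← mul_assoc, ← mul_assoc, hc.eq])
        (fun a ha => by
          show a 0 * a 1 * (a 2 * (a 0)⁻¹) = a 2 * (a 0)⁻¹ * (a 0 * a 1)
          rw [show a 2 * (a 0)⁻¹ * (a 0 * a 1) = a 2 * a 1 from by group,
            ← mul_assoc, ha]
          group)
  rw [key]
  have hG : (Nat.card G : ℚ) ≠ 0 := by exact_mod_cast Nat.card_pos.ne'
  push_cast
  field_simp
end

section
/- Let G be a finite group and let π be a permutation of {1,...,4} with π(1)=1 and π not the identity. Then the probability that a_1 a_2 a_3 a_4 = a_{π(1)} a_{π(2)} a_{π(3)} a_{π(4)} for uniformly random a_i in G equals k(G)/|G|. -/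
section Aux

variable {G : Type*} [Group G]

/-- Case π = (1 2): equation `a0 a1 a2 a3 = a0 a2 a1 a3`. -/
def stmt6eA : {a : Fin 4 → G // a 0 * a 1 * a 2 * a 3 = a 0 * a 2 * a 1 * a 3} ≃
    ({p : G × G // Commute p.1 p.2} × G × G) where
  toFun a := (⟨(a.1 1, a.1 2), by
    have h := a.2
    simp only [mul_assoc] at h
    have h2 := mul_left_cancel h
    show a.1 1 * a.1 2 = a.1 2 * a.1 1
    have h3 : (a.1 1 * a.1 2) * a.1 3 = (a.1 2 * a.1 1) * a.1 3 := by
      rw [mul_assoc, mul_assoc]; exact h2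
    exact mul_right_cancel h3⟩, a.1 0, a.1 3)
  invFun x := ⟨![x.2.1, x.1.1.1, x.1.1.2, x.2.2], by
    have hc := x.1.2.eq
    show x.2.1 * x.1.1.1 * x.1.1.2 * x.2.2 = x.2.1 * x.1.1.2 * x.1.1.1 * x.2.2
    simp only [mul_assoc]
    rw [← mul_assoc x.1.1.1, hc, mul_assoc]⟩
  left_inv a := Subtype.ext (by funext i; fin_cases i <;> rfl)
  right_inv x := by rfl

/-- Case π = (2 3): equation `a0 a1 a2 a3 = a0 a1 a3 a2`. -/
def stmt6eB : {a : Fin 4 → G // a 0 * a 1 * a 2 * a 3 = a 0 * a 1 * a 3 * a 2} ≃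
    ({p : G × G // Commute p.1 p.2} × G × G) where
  toFun a := (⟨(a.1 2, a.1 3), by
    have h := a.2
    simp only [mul_assoc] at h
    exact mul_left_cancel (mul_left_cancel h)⟩, a.1 0, a.1 1)
  invFun x := ⟨![x.2.1, x.2.2, x.1.1.1, x.1.1.2], by
    have hc := x.1.2.eq
    show x.2.1 * x.2.2 * x.1.1.1 * x.1.1.2 = x.2.1 * x.2.2 * x.1.1.2 * x.1.1.1
    simp only [mul_assoc]
    rw [hc]⟩
  left_inv a := Subtype.ext (by funext i; fin_cases i <;> rfl)
  right_inv x := by rfl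

/-- Case π = (1 3): equation `a0 a1 a2 a3 = a0 a3 a2 a1`. -/
def stmt6eC : {a : Fin 4 → G // a 0 * a 1 * a 2 * a 3 = a 0 * a 3 * a 2 * a 1} ≃
    ({p : G × G // Commute p.1 p.2} × G × G) where
  toFun a := (⟨(a.1 1 * a.1 2, a.1 3 * a.1 2), by
    have h := a.2
    simp only [mul_assoc] at h
    have h2 := mul_left_cancel h
    -- h2 : a1 * (a2 * a3) = a3 * (a2 * a1)
    show (a.1 1 * a.1 2) * (a.1 3 * a.1 2) = (a.1 3 * a.1 2) * (a.1 1 * a.1 2)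
    have h3 : (a.1 1 * (a.1 2 * a.1 3)) * a.1 2 = (a.1 3 * (a.1 2 * a.1 1)) * a.1 2 := by
      rw [h2]
    calc (a.1 1 * a.1 2) * (a.1 3 * a.1 2)
        = (a.1 1 * (a.1 2 * a.1 3)) * a.1 2 := by rw [mul_assoc, mul_assoc, mul_assoc]
      _ = (a.1 3 * (a.1 2 * a.1 1)) * a.1 2 := h3
      _ = (a.1 3 * a.1 2) * (a.1 1 * a.1 2) := by rw [mul_assoc, mul_assoc, mul_assoc]⟩,
    a.1 0, a.1 2)
  invFun x := ⟨![x.2.1, x.1.1.1 * x.2.2⁻¹, x.2.2, x.1.1.2 * x.2.2⁻¹], by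
    have hc := x.1.2.eq
    show x.2.1 * (x.1.1.1 * x.2.2⁻¹) * x.2.2 * (x.1.1.2 * x.2.2⁻¹) =
      x.2.1 * (x.1.1.2 * x.2.2⁻¹) * x.2.2 * (x.1.1.1 * x.2.2⁻¹)
    simp only [mul_assoc, inv_mul_cancel_left]
    rw [← mul_assoc x.1.1.1, ← mul_assoc x.1.1.2, hc]⟩
  left_inv a := Subtype.ext (by
    funext i; fin_cases i <;> simp [Matrix.cons_val_zero, Matrix.cons_val_one])
  right_inv x := by
    refine Prod.ext (Subtype.ext ?_) rfl
    show (x.1.1.1 * x.2.2⁻¹ * x.2.2, x.1.1.2 * x.2.2⁻¹ * x.2.2) = x.1.1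
    simp

/-- Case π = (1 2 3) on positions: equation `a0 a1 a2 a3 = a0 a2 a3 a1`. -/
def stmt6eD : {a : Fin 4 → G // a 0 * a 1 * a 2 * a 3 = a 0 * a 2 * a 3 * a 1} ≃
    ({p : G × G // Commute p.1 p.2} × G × G) where
  toFun a := (⟨(a.1 1, a.1 2 * a.1 3), by
    have h := a.2
    simp only [mul_assoc] at h
    have h2 := mul_left_cancel h
    show a.1 1 * (a.1 2 * a.1 3) = (a.1 2 * a.1 3) * a.1 1
    rw [h2, mul_assoc]⟩, a.1 0, a.1 2)
  invFun x := ⟨![x.2.1, x.1.1.1, x.2.2, x.2.2⁻¹ * x.1.1.2], by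
    have hc := x.1.2.eq
    show x.2.1 * x.1.1.1 * x.2.2 * (x.2.2⁻¹ * x.1.1.2) =
      x.2.1 * x.2.2 * (x.2.2⁻¹ * x.1.1.2) * x.1.1.1
    simp only [mul_assoc, inv_mul_cancel_left, mul_inv_cancel_left]
    rw [hc]⟩
  left_inv a := Subtype.ext (by
    funext i; fin_cases i <;> simp)
  right_inv x := by
    refine Prod.ext (Subtype.ext ?_) rfl
    show (x.1.1.1, x.2.2 * (x.2.2⁻¹ * x.1.1.2)) = x.1.1
    simp
/-- Case π = (1 3 2) on positions: equation `a0 a1 a2 a3 = a0 a3 a1 a2`. -/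
def stmt6eE : {a : Fin 4 → G // a 0 * a 1 * a 2 * a 3 = a 0 * a 3 * a 1 * a 2} ≃
    ({p : G × G // Commute p.1 p.2} × G × G) where
  toFun a := (⟨(a.1 1 * a.1 2, a.1 3), by
    have h := a.2
    simp only [mul_assoc] at h
    have h2 := mul_left_cancel h
    show (a.1 1 * a.1 2) * a.1 3 = a.1 3 * (a.1 1 * a.1 2)
    rw [mul_assoc, h2]⟩, a.1 0, a.1 1)
  invFun x := ⟨![x.2.1, x.2.2, x.2.2⁻¹ * x.1.1.1, x.1.1.2], by
    have hc := x.1.2.eq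
    show x.2.1 * x.2.2 * (x.2.2⁻¹ * x.1.1.1) * x.1.1.2 =
      x.2.1 * x.1.1.2 * x.2.2 * (x.2.2⁻¹ * x.1.1.1)
    simp only [mul_assoc, inv_mul_cancel_left, mul_inv_cancel_left]
    rw [hc]⟩
  left_inv a := Subtype.ext (by
    funext i; fin_cases i <;> simp)
  right_inv x := by
    refine Prod.ext (Subtype.ext ?_) rfl
    show (x.2.2 * (x.2.2⁻¹ * x.1.1.1), x.1.1.2) = x.1.1
    simp

theorem stmt6card {P : (Fin 4 → G) → Prop}
    (e : {a : Fin 4 → G // P a} ≃ ({p : G × G // Commute p.1 p.2} × G × G)) :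
    Nat.card {a : Fin 4 → G // P a} =
      Nat.card (ConjClasses G) * Nat.card G ^ 3 := by
  rw [Nat.card_congr e, Nat.card_prod, Nat.card_prod,
    card_comm_eq_card_conjClasses_mul_card]
  ring

end Aux

theorem stmt6 {G : Type*} [Group G] [Fintype G] (π : Equiv.Perm (Fin 4))
    (h1 : π 0 = 0) (hπ : π ≠ 1) :
    (Nat.card {a : Fin 4 → G //
        a 0 * a 1 * a 2 * a 3 = a (π 0) * a (π 1) * a (π 2) * a (π 3)} : ℚ) /
        (Nat.card G) ^ 4 =
      (Nat.card (ConjClasses G) : ℚ) / Nat.card G := by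
  have hn : (0 : ℚ) < (Nat.card G : ℚ) := by exact_mod_cast Nat.card_pos
  have hfin : ∀ n, n = Nat.card (ConjClasses G) * Nat.card G ^ 3 →
      (n : ℚ) / (Nat.card G) ^ 4 = (Nat.card (ConjClasses G) : ℚ) / Nat.card G := by
    intro n hnn
    subst hnn
    push_cast
    field_simp
  have key : ∀ σ : Equiv.Perm (Fin 4), σ 0 = 0 → σ ≠ 1 →
      (σ 1 = 2 ∧ σ 2 = 1 ∧ σ 3 = 3) ∨ (σ 1 = 1 ∧ σ 2 = 3 ∧ σ 3 = 2) ∨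
      (σ 1 = 3 ∧ σ 2 = 2 ∧ σ 3 = 1) ∨ (σ 1 = 2 ∧ σ 2 = 3 ∧ σ 3 = 1) ∨
      (σ 1 = 3 ∧ σ 2 = 1 ∧ σ 3 = 2) := by decide
  rcases key π h1 hπ with ⟨e1, e2, e3⟩ | ⟨e1, e2, e3⟩ | ⟨e1, e2, e3⟩ | ⟨e1, e2, e3⟩ |
    ⟨e1, e2, e3⟩ <;> simp only [h1, e1, e2, e3]
  · exact hfin _ (stmt6card stmt6eA)
  · exact hfin _ (stmt6card stmt6eB)
  · exact hfin _ (stmt6card stmt6eC)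
  · exact hfin _ (stmt6card stmt6eD)
  · exact hfin _ (stmt6card stmt6eE)
end

section
/- Let G be a finite group. The number of ordered 4-tuples (a_1,a_2,a_3,a_4) in G^4 with a_1a_2a_3a_4 = a_2a_1a_4a_3 equals the number of ordered 4-tuples with a_1a_2a_3a_4 = a_4a_3a_2a_1. -/
theorem stmt7 {G : Type*} [Group G] [Fintype G] :
    Nat.card {a : Fin 4 → G // a 0 * a 1 * a 2 * a 3 = a 1 * a 0 * a 3 * a 2} =
    Nat.card {a : Fin 4 → G // a 0 * a 1 * a 2 * a 3 = a 3 * a 2 * a 1 * a 0} := by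
  apply Nat.card_congr
  refine
    { toFun := fun x =>
        ⟨![x.1 1 * x.1 0 * (x.1 2)⁻¹, x.1 0, (x.1 0)⁻¹ * (x.1 1)⁻¹ * (x.1 0)⁻¹,
            x.1 1 * x.1 0 * x.1 3], ?_⟩
      invFun := fun y =>
        ⟨![y.1 1, (y.1 1)⁻¹ * (y.1 2)⁻¹ * (y.1 1)⁻¹, (y.1 0)⁻¹ * (y.1 1)⁻¹ * (y.1 2)⁻¹,
            y.1 2 * y.1 1 * y.1 3], ?_⟩
      left_inv := ?_
      right_inv := ?_ }
  · obtain ⟨a, h⟩ := x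
    simp only [Matrix.cons_val_zero, Matrix.cons_val_one, Matrix.head_cons,
      Matrix.cons_val_two, Matrix.tail_cons, Matrix.cons_val_three]
    rw [show (a 1 * a 0 * (a 2)⁻¹) * a 0 * ((a 0)⁻¹ * (a 1)⁻¹ * (a 0)⁻¹) * (a 1 * a 0 * a 3)
        = (a 1 * a 0 * (a 2)⁻¹ * (a 1)⁻¹ * (a 0)⁻¹) * (a 1 * a 0 * a 3 * a 2) * (a 2)⁻¹
        from by group, ← h]
    group
  · obtain ⟨a, h⟩ := y
    simp only [Matrix.cons_val_zero, Matrix.cons_val_one, Matrix.head_cons,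
      Matrix.cons_val_two, Matrix.tail_cons, Matrix.cons_val_three]
    rw [show a 1 * ((a 1)⁻¹ * (a 2)⁻¹ * (a 1)⁻¹) * ((a 0)⁻¹ * (a 1)⁻¹ * (a 2)⁻¹) * (a 2 * a 1 * a 3)
        = a 3 * (a 0 * a 1 * a 2 * a 3)⁻¹ * a 3 from by group, h]
    group
  · rintro ⟨a, h⟩
    refine Subtype.ext (funext fun i => ?_)
    fin_cases i <;> simp <;> group
  · rintro ⟨a, h⟩
    refine Subtype.ext (funext fun i => ?_)
    fin_cases i <;> simp <;> group
end

section
/- Let G be a finite group. The number of ordered 4-tuples (a_1,a_2,a_3,a_4) in G^4 with a_1a_2a_3a_4 = a_4a_3a_2a_1 equals the sum over all ordered pairs (x,y) in G^2 of the number of ordered pairs (g,h) in G^2 satisfying g^{-1}xg · h^{-1}yh = xy. -/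
private lemma sigma_aux {G : Type*} [Group G]
    {x y g h x' y' g' h' : G}
    (p : (g, h).1⁻¹ * x * (g, h).1 * ((g, h).2⁻¹ * y * (g, h).2) = x * y)
    (p' : (g', h').1⁻¹ * x' * (g', h').1 * ((g', h').2⁻¹ * y' * (g', h').2) = x' * y')
    (hx : x = x') (hy : y = y') (hg : g = g') (hh : h = h') :
    (⟨x, y, ⟨(g, h), p⟩⟩ :
      Σ x : G, Σ y : G, {p : G × G // p.1⁻¹ * x * p.1 * (p.2⁻¹ * y * p.2) = x * y}) =
    ⟨x', y', ⟨(g', h'), p'⟩⟩ := by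
  subst hx; subst hy; subst hg; subst hh; rfl

theorem stmt8 {G : Type*} [Group G] [Fintype G] :
    Nat.card {a : Fin 4 → G // a 0 * a 1 * a 2 * a 3 = a 3 * a 2 * a 1 * a 0} =
    ∑ x : G, ∑ y : G,
      Nat.card {p : G × G // p.1⁻¹ * x * p.1 * (p.2⁻¹ * y * p.2) = x * y} := by
  classical
  have e : {a : Fin 4 → G // a 0 * a 1 * a 2 * a 3 = a 3 * a 2 * a 1 * a 0} ≃
      Σ x : G, Σ y : G, {p : G × G // p.1⁻¹ * x * p.1 * (p.2⁻¹ * y * p.2) = x * y} :=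
    { toFun := fun a =>
        ⟨a.1 0 * a.1 1, a.1 2 * a.1 3, (a.1 0, a.1 2 * a.1 1 * a.1 0), by
          have h := a.2
          group
          rw [← h]⟩
      invFun := fun s =>
        ⟨![s.2.2.1.1, s.2.2.1.1⁻¹ * s.1,
           s.2.2.1.2 * s.2.2.1.1⁻¹ * s.1⁻¹ * s.2.2.1.1,
           s.2.2.1.1⁻¹ * s.1 * s.2.2.1.1 * s.2.2.1.2⁻¹ * s.2.1], by
          obtain ⟨x, y, ⟨g, h⟩, hc⟩ := s
          simp only [Matrix.cons_val_zero, Matrix.cons_val_one, Matrix.head_cons,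
            Matrix.cons_val_two, Matrix.tail_cons, Matrix.cons_val_three]
          have hc' : g⁻¹ * x * g * (h⁻¹ * y * h) = x * y := hc
          group
          rw [← hc']
          group⟩
      left_inv := fun a => by
        apply Subtype.ext
        funext i
        fin_cases i <;>
          simp only [Matrix.cons_val_zero, Matrix.cons_val_one, Matrix.head_cons,
            Matrix.cons_val_two, Matrix.tail_cons, Matrix.cons_val_three] <;>
          (first | (group; rfl) | rfl | group)
      right_inv := fun s => by
        obtain ⟨x, y, ⟨g, h⟩, hc⟩ := s
        simp only [Matrix.cons_val_zero, Matrix.cons_val_one, Matrix.head_cons,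
          Matrix.cons_val_two, Matrix.tail_cons, Matrix.cons_val_three]
        exact sigma_aux _ hc (by group) (by simp only [Matrix.vecHead, Matrix.vecTail, Function.comp_apply, Matrix.cons_val_succ, Matrix.cons_val_zero]; group) (by group) (by group) }
  rw [Nat.card_congr e]
  simp_rw [Nat.card_eq_fintype_card, Fintype.card_sigma]
end

section
/- Let G be a finite group. The number of ordered 4-tuples (a_1,a_2,a_3,a_4) in G^4 with a_1a_2a_3a_4 = a_3a_1a_4a_2 equals the number of ordered 4-tuples (t_1,t_2,t_3,t_4) in G^4 with t_1t_2t_3t_4 = t_4t_3t_2t_1. -/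
theorem stmt9 {G : Type*} [Group G] [Fintype G] :
    Nat.card {a : Fin 4 → G // a 0 * a 1 * a 2 * a 3 = a 2 * a 0 * a 3 * a 1} =
    Nat.card {t : Fin 4 → G // t 0 * t 1 * t 2 * t 3 = t 3 * t 2 * t 1 * t 0} := by
  apply Nat.card_congr
  refine ⟨fun a => ⟨![a.1 0, (a.1 0 * a.1 1 * a.1 2)⁻¹, a.1 2, a.1 0 * a.1 3], ?_⟩,
          fun t => ⟨![t.1 0, (t.1 2 * t.1 1 * t.1 0)⁻¹, t.1 2, (t.1 0)⁻¹ * t.1 3], ?_⟩,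
          ?_, ?_⟩
  · obtain ⟨a, h⟩ := a
    simp only [Matrix.cons_val_zero, Matrix.cons_val_one, Matrix.head_cons,
      Matrix.cons_val_two, Matrix.tail_cons, Matrix.cons_val_three]
    have h2 : a 2 * a 0 * a 3 * a 1 * (a 0 * a 1 * a 2 * a 3)⁻¹ = 1 := by rw [← h]; group
    calc a 0 * (a 0 * a 1 * a 2)⁻¹ * a 2 * (a 0 * a 3)
        = (a 0 * (a 2)⁻¹ * (a 1)⁻¹ * (a 0)⁻¹) *
            (a 2 * a 0 * a 3 * a 1 * (a 0 * a 1 * a 2 * a 3)⁻¹) *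
            (a 0 * (a 2)⁻¹ * (a 1)⁻¹ * (a 0)⁻¹)⁻¹ *
            (a 0 * a 3 * a 2 * (a 0 * a 1 * a 2)⁻¹ * a 0) := by group
      _ = a 0 * a 3 * a 2 * (a 0 * a 1 * a 2)⁻¹ * a 0 := by rw [h2]; group
  · obtain ⟨t, h⟩ := t
    simp only [Matrix.cons_val_zero, Matrix.cons_val_one, Matrix.head_cons,
      Matrix.cons_val_two, Matrix.tail_cons, Matrix.cons_val_three]
    have h2 : t 3 * t 2 * t 1 * t 0 * (t 0 * t 1 * t 2 * t 3)⁻¹ = 1 := by rw [← h]; group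
    calc t 0 * (t 2 * t 1 * t 0)⁻¹ * t 2 * ((t 0)⁻¹ * t 3)
        = ((t 1)⁻¹ * (t 0)⁻¹) *
            (t 3 * t 2 * t 1 * t 0 * (t 0 * t 1 * t 2 * t 3)⁻¹) *
            ((t 1)⁻¹ * (t 0)⁻¹)⁻¹ *
            (t 2 * t 0 * ((t 0)⁻¹ * t 3) * (t 2 * t 1 * t 0)⁻¹) := by group
      _ = t 2 * t 0 * ((t 0)⁻¹ * t 3) * (t 2 * t 1 * t 0)⁻¹ := by rw [h2]; group
  · rintro ⟨a, h⟩
    ext i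
    fin_cases i <;> simp
  · rintro ⟨t, h⟩
    ext i
    fin_cases i <;> simp
end

section
/- Let G be a finite group. The number of ordered 4-tuples (a_1,a_2,a_3,a_4) in G^4 with a_1a_2a_3a_4 = a_2a_4a_1a_3 equals the number of ordered 4-tuples (t_1,t_2,t_3,t_4) in G^4 with t_1t_2t_3t_4 = t_4t_3t_2t_1. -/
theorem stmt10 {G : Type*} [Group G] [Fintype G] :
    Nat.card {a : Fin 4 → G // a 0 * a 1 * a 2 * a 3 = a 1 * a 3 * a 0 * a 2} =
    Nat.card {t : Fin 4 → G // t 0 * t 1 * t 2 * t 3 = t 3 * t 2 * t 1 * t 0} := by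
  refine Nat.card_congr ?_
  refine
    { toFun := fun a => ⟨![(a.1 1)⁻¹ * a.1 0, a.1 1, a.1 2, a.1 3 * (a.1 2)⁻¹], ?_⟩
      invFun := fun t => ⟨![t.1 1 * t.1 0, t.1 1, t.1 2, t.1 3 * t.1 2], ?_⟩
      left_inv := ?_
      right_inv := ?_ }
  · have h := a.2
    simp only [Matrix.cons_val_zero, Matrix.cons_val_one, Matrix.head_cons,
      Matrix.cons_val_two, Matrix.tail_cons, Matrix.cons_val_three]
    simpa [mul_assoc] using congrArg (fun x => (a.1 1)⁻¹ * (x * (a.1 2)⁻¹)) h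
  · have h := t.2
    simp only [Matrix.cons_val_zero, Matrix.cons_val_one, Matrix.head_cons,
      Matrix.cons_val_two, Matrix.tail_cons, Matrix.cons_val_three]
    simpa [mul_assoc] using congrArg (fun x => t.1 1 * (x * t.1 2)) h
  · rintro ⟨a, ha⟩
    apply Subtype.ext
    funext i
    fin_cases i <;> simp [mul_assoc]
  · rintro ⟨t, ht⟩
    apply Subtype.ext
    funext i
    fin_cases i <;> simp [mul_assoc]
end

section
/- Let G be a finite group. The number of ordered 4-tuples (a_1,a_2,a_3,a_4) in G^4 with a_1a_2a_3a_4 = a_3a_2a_4a_1 equals the number of ordered 4-tuples with a_1a_2a_3a_4 = a_4a_3a_2a_1. -/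
theorem stmt11 {G : Type*} [Group G] [Fintype G] :
    Nat.card {a : Fin 4 → G // a 0 * a 1 * a 2 * a 3 = a 2 * a 1 * a 3 * a 0} =
    Nat.card {a : Fin 4 → G // a 0 * a 1 * a 2 * a 3 = a 3 * a 2 * a 1 * a 0} := by
  refine Nat.card_congr (Equiv.subtypeEquiv
    ⟨fun a => Function.update a 0 (a 3 * a 0),
     fun a => Function.update a 0 ((a 3)⁻¹ * a 0), ?_, ?_⟩ ?_)
  · intro a
    funext i
    by_cases h : i = 0 <;> simp [h, Function.update_apply]
  · intro a
    funext i
    by_cases h : i = 0 <;> simp [h, Function.update_apply]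
  · intro a
    simp only [Equiv.coe_fn_mk, Function.update_apply]
    norm_num
    simp only [mul_assoc]
    exact (mul_right_inj (a 3)).symm
end

section
/- Let G be the dihedral group of order 8 (or the quaternion group of order 8). Then the probability that a_1a_2a_3a_4 = a_4a_3a_2a_1 for uniformly random a_i in G equals 17/32. -/
set_option maxRecDepth 10000

def splitEquiv (G : Type*) [Group G] :
    {a : Fin 4 → G // a 0 * a 1 * a 2 * a 3 = a 3 * a 2 * a 1 * a 0} ≃
    (g : G) × {p : G × G × G // g * p.1 * p.2.1 * p.2.2 = p.2.2 * p.2.1 * p.1 * g} where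
  toFun x := ⟨x.1 0, ⟨(x.1 1, x.1 2, x.1 3), x.2⟩⟩
  invFun y := ⟨![y.1, y.2.1.1, y.2.1.2.1, y.2.1.2.2], y.2.2⟩
  left_inv x := by
    ext i
    fin_cases i <;> rfl
  right_inv y := rfl

lemma dihedral_count (a : DihedralGroup 4) :
    Fintype.card {p : DihedralGroup 4 × DihedralGroup 4 × DihedralGroup 4 //
      a * p.1 * p.2.1 * p.2.2 = p.2.2 * p.2.1 * p.1 * a} =
    if a = 1 ∨ a = DihedralGroup.r 2 then 320 else 256 := by
  revert a; decide

lemma quaternion_count (a : QuaternionGroup 2) :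
    Fintype.card {p : QuaternionGroup 2 × QuaternionGroup 2 × QuaternionGroup 2 //
      a * p.1 * p.2.1 * p.2.2 = p.2.2 * p.2.1 * p.1 * a} =
    if a = 1 ∨ a = QuaternionGroup.a 2 then 320 else 256 := by
  revert a; decide

theorem stmt12 :
    (Nat.card {a : Fin 4 → DihedralGroup 4 //
        a 0 * a 1 * a 2 * a 3 = a 3 * a 2 * a 1 * a 0} : ℚ) / 8 ^ 4 = 17 / 32 ∧
    (Nat.card {a : Fin 4 → QuaternionGroup 2 //
        a 0 * a 1 * a 2 * a 3 = a 3 * a 2 * a 1 * a 0} : ℚ) / 8 ^ 4 = 17 / 32 := by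
  have h1 : Nat.card {a : Fin 4 → DihedralGroup 4 //
      a 0 * a 1 * a 2 * a 3 = a 3 * a 2 * a 1 * a 0} = 2176 := by
    rw [Nat.card_congr (splitEquiv (DihedralGroup 4)), Nat.card_eq_fintype_card,
      Fintype.card_sigma]
    simp only [dihedral_count]
    decide
  have h2 : Nat.card {a : Fin 4 → QuaternionGroup 2 //
      a 0 * a 1 * a 2 * a 3 = a 3 * a 2 * a 1 * a 0} = 2176 := by
    rw [Nat.card_congr (splitEquiv (QuaternionGroup 2)), Nat.card_eq_fintype_card,
      Fintype.card_sigma]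
    simp only [quaternion_count]
    decide
  rw [h1, h2]
  norm_num
end

section
/- Let G be a finite group. The number of ordered 2n-tuples (a_1,...,a_{2n}) in G^{2n} satisfying a_1 a_2 ⋯ a_{2n} = a_{2n} a_{2n-1} ⋯ a_1 equals the sum over all n-tuples (x_1,...,x_n) in G^n of the number of n-tuples (g_1,...,g_n) in G^n satisfying g_1^{-1}x_1g_1 · g_2^{-1}x_2g_2 ⋯ g_n^{-1}x_ng_n = x_1x_2⋯x_n. -/
set_option linter.unusedSectionVars false

section aux

variable {G : Type*} [Group G] [Fintype G]

private lemma ofFn_cons_prod {m : ℕ} (u : G) (c : Fin m → G) :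
    (List.ofFn (Fin.cons u c : Fin (m+1) → G)).prod = u * (List.ofFn c).prod := by
  simp [List.ofFn_succ]

private lemma ofFn_snoc_prod {m : ℕ} (b : Fin m → G) (v : G) :
    (List.ofFn (Fin.snoc b v : Fin (m+1) → G)).prod = (List.ofFn b).prod * v := by
  rw [List.ofFn_succ']; simp

private lemma ofFn_cons_rev {m : ℕ} (u : G) (c : Fin m → G) :
    (List.ofFn (Fin.cons u c : Fin (m+1) → G)).reverse.prod
      = (List.ofFn c).reverse.prod * u := by
  simp [List.ofFn_succ]

private lemma ofFn_snoc_rev {m : ℕ} (b : Fin m → G) (v : G) :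
    (List.ofFn (Fin.snoc b v : Fin (m+1) → G)).reverse.prod
      = v * (List.ofFn b).reverse.prod := by
  rw [List.ofFn_succ']; simp

private lemma sum_cons (p : ℕ) (F : (Fin (p + 1) → G) → ℕ) :
    (∑ a : Fin (p + 1) → G, F a) = ∑ u : G, ∑ c : Fin p → G, F (Fin.cons u c) := by
  rw [← (Fin.consEquiv (fun _ : Fin (p + 1) => G)).sum_comp F, Fintype.sum_prod_type]
  rfl

private lemma sum_snoc (p : ℕ) (F : (Fin (p + 1) → G) → ℕ) :
    (∑ a : Fin (p + 1) → G, F a) = ∑ v : G, ∑ b : Fin p → G, F (Fin.snoc b v) := by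
  rw [← (Fin.snocEquiv (fun _ : Fin (p + 1) => G)).sum_comp F, Fintype.sum_prod_type]
  rfl

private lemma step_lemma (φ : G → ℕ) (hφ : ∀ g x : G, φ (g * x * g⁻¹) = φ x) (s t : G) :
    ∑ u : G, ∑ v : G, φ (v * t * u * v⁻¹ * s⁻¹ * u⁻¹)
      = ∑ z : G, ∑ k : G, φ (k⁻¹ * z⁻¹ * k * (t * s⁻¹) * z) := by
  refine (Fintype.sum_equiv (Equiv.mulLeft s⁻¹)
    (fun z => ∑ k : G, φ (k⁻¹ * z⁻¹ * k * (t * s⁻¹) * z))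
    (fun u => ∑ v : G, φ (v * t * u * v⁻¹ * s⁻¹ * u⁻¹)) fun z => ?_).symm
  refine Fintype.sum_equiv (Equiv.mulLeft s⁻¹)
    (fun k => φ (k⁻¹ * z⁻¹ * k * (t * s⁻¹) * z))
    (fun v => φ (v * t * (Equiv.mulLeft s⁻¹ z) * v⁻¹ * s⁻¹ * (Equiv.mulLeft s⁻¹ z)⁻¹))
    fun k => ?_
  simp only [Equiv.coe_mulLeft]
  rw [← hφ (s⁻¹ * z * k) (k⁻¹ * z⁻¹ * k * (t * s⁻¹) * z)]
  congr 1
  group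

private lemma conj_sum_invariant (φ : G → ℕ) (hφ : ∀ g x : G, φ (g * x * g⁻¹) = φ x)
    (g c : G) :
    ∑ z : G, ∑ k : G, φ (k⁻¹ * z⁻¹ * k * (g * c * g⁻¹) * z)
      = ∑ z : G, ∑ k : G, φ (k⁻¹ * z⁻¹ * k * c * z) := by
  refine (Fintype.sum_equiv ((MulAut.conj g).toEquiv)
    (fun z => ∑ k : G, φ (k⁻¹ * z⁻¹ * k * c * z))
    (fun z => ∑ k : G, φ (k⁻¹ * z⁻¹ * k * (g * c * g⁻¹) * z)) fun z => ?_).symm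
  refine Fintype.sum_equiv ((MulAut.conj g).toEquiv)
    (fun k => φ (k⁻¹ * z⁻¹ * k * c * z))
    (fun k => φ (k⁻¹ * ((MulAut.conj g).toEquiv z)⁻¹ * k * (g * c * g⁻¹) *
      ((MulAut.conj g).toEquiv z))) fun k => ?_
  simp only [MulEquiv.toEquiv_eq_coe, MulEquiv.coe_toEquiv, MulAut.conj_apply]
  rw [← hφ g (k⁻¹ * z⁻¹ * k * c * z)]
  congr 1
  group

private lemma gen :
    ∀ (m : ℕ) (φ : G → ℕ), (∀ g x : G, φ (g * x * g⁻¹) = φ x) →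
    (∑ a : Fin (2 * m) → G, φ ((List.ofFn a).reverse.prod * ((List.ofFn a).prod)⁻¹))
      = ∑ x : Fin m → G, ∑ g : Fin m → G,
          φ (((List.ofFn fun i => (g i)⁻¹ * x i * g i).prod)⁻¹ * (List.ofFn x).prod) := by
  intro m
  induction m with
  | zero =>
    intro φ hφ
    simp
  | succ m ih =>
    intro φ hφ
    have hLps : ∀ (u v : G) (b : Fin (2 * m) → G),
        φ ((List.ofFn (Fin.cons u (Fin.snoc b v) : Fin (2 * m + 1 + 1) → G)).reverse.prod *
            ((List.ofFn (Fin.cons u (Fin.snoc b v) : Fin (2 * m + 1 + 1) → G)).prod)⁻¹)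
          = φ (v * (List.ofFn b).reverse.prod * u * v⁻¹ * ((List.ofFn b).prod)⁻¹ * u⁻¹) := by
      intro u v b
      rw [ofFn_cons_rev, ofFn_snoc_rev, ofFn_cons_prod, ofFn_snoc_prod]
      congr 1
      group
    have hRps : ∀ (y h : Fin m → G) (z k : G),
        φ (((List.ofFn fun i => ((Fin.snoc h k : Fin (m+1) → G) i)⁻¹ *
              (Fin.snoc y z : Fin (m+1) → G) i * (Fin.snoc h k : Fin (m+1) → G) i).prod)⁻¹ *
            (List.ofFn (Fin.snoc y z : Fin (m+1) → G)).prod)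
          = φ (k⁻¹ * z⁻¹ * k *
              (((List.ofFn fun i => (h i)⁻¹ * y i * h i).prod)⁻¹ * (List.ofFn y).prod) * z) := by
      intro y h z k
      have hfe : (fun i => ((Fin.snoc h k : Fin (m+1) → G) i)⁻¹ *
            (Fin.snoc y z : Fin (m+1) → G) i * (Fin.snoc h k : Fin (m+1) → G) i)
          = Fin.snoc (fun i => (h i)⁻¹ * y i * h i) (k⁻¹ * z * k) := by
        funext i
        refine Fin.lastCases ?_ (fun j => ?_) i <;> simp
      rw [hfe, ofFn_snoc_prod, ofFn_snoc_prod]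
      congr 1
      group
    calc
      (∑ a : Fin (2 * (m + 1)) → G,
          φ ((List.ofFn a).reverse.prod * ((List.ofFn a).prod)⁻¹))
        = ∑ u : G, ∑ c : Fin (2 * m + 1) → G,
            φ ((List.ofFn (Fin.cons u c : Fin (2 * m + 1 + 1) → G)).reverse.prod *
              ((List.ofFn (Fin.cons u c : Fin (2 * m + 1 + 1) → G)).prod)⁻¹) :=
          sum_cons (2 * m + 1) _
      _ = ∑ u : G, ∑ v : G, ∑ b : Fin (2 * m) → G,
            φ (v * (List.ofFn b).reverse.prod * u * v⁻¹ * ((List.ofFn b).prod)⁻¹ * u⁻¹) := by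
          refine Finset.sum_congr rfl fun u _ => ?_
          refine (sum_snoc (2 * m) _).trans ?_
          exact Finset.sum_congr rfl fun v _ => Finset.sum_congr rfl fun b _ => hLps u v b
      _ = ∑ u : G, ∑ b : Fin (2 * m) → G, ∑ v : G,
            φ (v * (List.ofFn b).reverse.prod * u * v⁻¹ * ((List.ofFn b).prod)⁻¹ * u⁻¹) :=
          Finset.sum_congr rfl fun u _ => Finset.sum_comm
      _ = ∑ b : Fin (2 * m) → G, ∑ u : G, ∑ v : G,
            φ (v * (List.ofFn b).reverse.prod * u * v⁻¹ * ((List.ofFn b).prod)⁻¹ * u⁻¹) :=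
          Finset.sum_comm
      _ = ∑ b : Fin (2 * m) → G, ∑ z : G, ∑ k : G,
            φ (k⁻¹ * z⁻¹ * k *
              ((List.ofFn b).reverse.prod * ((List.ofFn b).prod)⁻¹) * z) :=
          Finset.sum_congr rfl fun b _ =>
            step_lemma φ hφ ((List.ofFn b).prod) ((List.ofFn b).reverse.prod)
      _ = ∑ y : Fin m → G, ∑ h : Fin m → G, ∑ z : G, ∑ k : G,
            φ (k⁻¹ * z⁻¹ * k *
              (((List.ofFn fun i => (h i)⁻¹ * y i * h i).prod)⁻¹ * (List.ofFn y).prod) * z) :=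
          ih (fun c => ∑ z : G, ∑ k : G, φ (k⁻¹ * z⁻¹ * k * c * z))
            (fun g c => conj_sum_invariant φ hφ g c)
      _ = ∑ y : Fin m → G, ∑ z : G, ∑ h : Fin m → G, ∑ k : G,
            φ (k⁻¹ * z⁻¹ * k *
              (((List.ofFn fun i => (h i)⁻¹ * y i * h i).prod)⁻¹ * (List.ofFn y).prod) * z) :=
          Finset.sum_congr rfl fun y _ => Finset.sum_comm
      _ = ∑ z : G, ∑ y : Fin m → G, ∑ h : Fin m → G, ∑ k : G,
            φ (k⁻¹ * z⁻¹ * k *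
              (((List.ofFn fun i => (h i)⁻¹ * y i * h i).prod)⁻¹ * (List.ofFn y).prod) * z) :=
          Finset.sum_comm
      _ = ∑ z : G, ∑ y : Fin m → G, ∑ k : G, ∑ h : Fin m → G,
            φ (k⁻¹ * z⁻¹ * k *
              (((List.ofFn fun i => (h i)⁻¹ * y i * h i).prod)⁻¹ * (List.ofFn y).prod) * z) :=
          Finset.sum_congr rfl fun z _ => Finset.sum_congr rfl fun y _ => Finset.sum_comm
      _ = ∑ z : G, ∑ y : Fin m → G, ∑ k : G, ∑ h : Fin m → G,
            φ (((List.ofFn fun i => ((Fin.snoc h k : Fin (m+1) → G) i)⁻¹ *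
              (Fin.snoc y z : Fin (m+1) → G) i * (Fin.snoc h k : Fin (m+1) → G) i).prod)⁻¹ *
              (List.ofFn (Fin.snoc y z : Fin (m+1) → G)).prod) := by
          refine Finset.sum_congr rfl fun z _ => Finset.sum_congr rfl fun y _ =>
            Finset.sum_congr rfl fun k _ => Finset.sum_congr rfl fun h _ => ?_
          exact (hRps y h z k).symm
      _ = ∑ z : G, ∑ y : Fin m → G, ∑ g : Fin (m + 1) → G,
            φ (((List.ofFn fun i => (g i)⁻¹ * (Fin.snoc y z : Fin (m+1) → G) i * g i).prod)⁻¹ *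
              (List.ofFn (Fin.snoc y z : Fin (m+1) → G)).prod) := by
          refine Finset.sum_congr rfl fun z _ => Finset.sum_congr rfl fun y _ => ?_
          exact (sum_snoc m (fun g : Fin (m+1) → G =>
            φ (((List.ofFn fun i => (g i)⁻¹ * (Fin.snoc y z : Fin (m+1) → G) i * g i).prod)⁻¹ *
              (List.ofFn (Fin.snoc y z : Fin (m+1) → G)).prod))).symm
      _ = ∑ x : Fin (m + 1) → G, ∑ g : Fin (m + 1) → G,
            φ (((List.ofFn fun i => (g i)⁻¹ * x i * g i).prod)⁻¹ * (List.ofFn x).prod) :=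
          (sum_snoc m (fun x : Fin (m+1) → G => ∑ g : Fin (m+1) → G,
            φ (((List.ofFn fun i => (g i)⁻¹ * x i * g i).prod)⁻¹ * (List.ofFn x).prod))).symm

end aux

theorem stmt16 {G : Type*} [Group G] [Fintype G] (n : ℕ) (hn : 0 < n) :
    Nat.card {a : Fin (2 * n) → G //
        (List.ofFn a).prod = (List.ofFn a).reverse.prod} =
    ∑ x : Fin n → G,
      Nat.card {g : Fin n → G //
        (List.ofFn fun i => (g i)⁻¹ * x i * g i).prod = (List.ofFn x).prod} := by
  classical
  set φ : G → ℕ := fun c => if c = 1 then 1 else 0 with hφdef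
  have hφ : ∀ g x : G, φ (g * x * g⁻¹) = φ x := by
    intro g x
    simp only [hφdef]
    refine if_congr ?_ rfl rfl
    constructor
    · intro hh
      have := congrArg (fun w => g⁻¹ * w * g) hh
      simpa [mul_assoc] using this
    · intro hh; simp [hh]
  have key := gen n φ hφ
  have hL : Nat.card {a : Fin (2 * n) → G //
      (List.ofFn a).prod = (List.ofFn a).reverse.prod}
      = ∑ a : Fin (2 * n) → G, φ ((List.ofFn a).reverse.prod * ((List.ofFn a).prod)⁻¹) := by
    rw [Nat.card_eq_fintype_card, Fintype.card_subtype, Finset.card_filter]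
    refine Finset.sum_congr rfl fun a _ => ?_
    simp only [hφdef, mul_inv_eq_one]
    exact if_congr eq_comm rfl rfl
  have hR : ∀ x : Fin n → G, Nat.card {g : Fin n → G //
      (List.ofFn fun i => (g i)⁻¹ * x i * g i).prod = (List.ofFn x).prod}
      = ∑ g : Fin n → G,
          φ (((List.ofFn fun i => (g i)⁻¹ * x i * g i).prod)⁻¹ * (List.ofFn x).prod) := by
    intro x
    rw [Nat.card_eq_fintype_card, Fintype.card_subtype, Finset.card_filter]
    refine Finset.sum_congr rfl fun g _ => ?_
    simp only [hφdef, inv_mul_eq_one]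
  rw [hL, key]
  exact Finset.sum_congr rfl fun x _ => (hR x).symm
end

section
/- Let G be a finite group. For every positive integer n, the number of 2n-tuples (a_1,...,a_{2n}) in G^{2n} with a_1a_2⋯a_{2n} = a_{2n}a_{2n-1}⋯a_1 equals the number of 2n-tuples with (a_1a_2)(a_3a_4)⋯(a_{2n-1}a_{2n}) = (a_2a_1)(a_4a_3)⋯(a_{2n}a_{2n-1}). -/
section Aux

variable {G : Type*} [Group G]

/-- Pack a `2*n`-tuple into an `n`-tuple of pairs. -/
theorem myPair_lt1 (n : ℕ) (i : Fin n) : 2 * i.val < 2 * n := by have := i.isLt; omega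

theorem myPair_lt2 (n : ℕ) (i : Fin n) : 2 * i.val + 1 < 2 * n := by have := i.isLt; omega

def myPair (n : ℕ) (a : Fin (2 * n) → G) : Fin n → G × G :=
  fun i => (a ⟨2 * i.val, myPair_lt1 n i⟩,
            a ⟨2 * i.val + 1, myPair_lt2 n i⟩)

def myUnpair (n : ℕ) (b : Fin n → G × G) : Fin (2 * n) → G :=
  fun j =>
    if j.val % 2 = 0 then (b ⟨j.val / 2, by have := j.isLt; omega⟩).1
    else (b ⟨j.val / 2, by have := j.isLt; omega⟩).2

theorem myPair_myUnpair (n : ℕ) (b : Fin n → G × G) : myPair n (myUnpair n b) = b := by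
  funext i
  have h1 : (2 * i.val) % 2 = 0 := by omega
  have h2 : ¬ (2 * i.val + 1) % 2 = 0 := by omega
  simp only [myPair, myUnpair, if_pos h1, if_neg h2]
  have e1 : (⟨(2 * i.val) / 2, by have := i.isLt; omega⟩ : Fin n) = i := by
    apply Fin.ext; show (2 * i.val) / 2 = i.val; omega
  have e2 : (⟨(2 * i.val + 1) / 2, by have := i.isLt; omega⟩ : Fin n) = i := by
    apply Fin.ext; show (2 * i.val + 1) / 2 = i.val; omega
  rw [e1, e2]

theorem myUnpair_myPair (n : ℕ) (a : Fin (2 * n) → G) : myUnpair n (myPair n a) = a := by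
  funext j
  by_cases h : j.val % 2 = 0
  · simp only [myUnpair, myPair, if_pos h]
    exact congrArg a (Fin.ext (by simp; omega))
  · simp only [myUnpair, myPair, if_neg h]
    exact congrArg a (Fin.ext (by simp; omega))

def Pp {n : ℕ} (b : Fin n → G × G) : G := (List.ofFn fun i => (b i).1 * (b i).2).prod
def Qf {n : ℕ} (b : Fin n → G × G) : G := (List.ofFn fun i => (b i).2 * (b i).1).prod
def Qr {n : ℕ} (b : Fin n → G × G) : G := (List.ofFn fun i => (b i).2 * (b i).1).reverse.prod

def phiAux : {n : ℕ} → G → (Fin n → G × G) → (Fin n → G × G)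
  | 0, _, b => b
  | _ + 1, g, b =>
      Fin.cons ((b 0).1 * g⁻¹, g * (b 0).2)
        (phiAux (g * ((b 0).2 * (b 0).1)) fun i => b i.succ)

def psiAux : {n : ℕ} → G → (Fin n → G × G) → (Fin n → G × G)
  | 0, _, b => b
  | _ + 1, g, b =>
      Fin.cons ((b 0).1 * g, g⁻¹ * (b 0).2)
        (psiAux ((b 0).2 * (b 0).1 * g) fun i => b i.succ)

theorem psiAux_phiAux : ∀ {n : ℕ} (g : G) (b : Fin n → G × G),
    psiAux g (phiAux g b) = b := by
  intro n
  induction n with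
  | zero => intro g b; rfl
  | succ n ih =>
      intro g b
      show psiAux g (Fin.cons _ _) = b
      rw [psiAux]
      simp only [Fin.cons_zero, Fin.cons_succ]
      have h1 : (b 0).1 * g⁻¹ * g = (b 0).1 := by group
      have h2 : g⁻¹ * (g * (b 0).2) = (b 0).2 := by group
      have h3 : g * (b 0).2 * ((b 0).1 * g⁻¹) * g = g * ((b 0).2 * (b 0).1) := by group
      rw [h1, h2, h3, ih]
      exact Fin.cons_self_tail b

theorem phiAux_psiAux : ∀ {n : ℕ} (g : G) (b : Fin n → G × G),
    phiAux g (psiAux g b) = b := by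
  intro n
  induction n with
  | zero => intro g b; rfl
  | succ n ih =>
      intro g b
      show phiAux g (Fin.cons _ _) = b
      rw [phiAux]
      simp only [Fin.cons_zero, Fin.cons_succ]
      have h1 : (b 0).1 * g * g⁻¹ = (b 0).1 := by group
      have h2 : g * (g⁻¹ * (b 0).2) = (b 0).2 := by group
      have h3 : g * (g⁻¹ * (b 0).2 * ((b 0).1 * g)) = (b 0).2 * (b 0).1 * g := by group
      rw [h1, h2, h3, ih]
      exact Fin.cons_self_tail b

theorem phiAux_mul : ∀ {n : ℕ} (g : G) (b : Fin n → G × G) (i : Fin n),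
    (phiAux g b i).1 * (phiAux g b i).2 = (b i).1 * (b i).2 := by
  intro n
  induction n with
  | zero => intro g b i; exact i.elim0
  | succ n ih =>
      intro g b i
      induction i using Fin.cases with
      | zero => show ((_ : G × G)).1 * _ = _; rw [phiAux]; simp
      | succ j => rw [phiAux]; simp only [Fin.cons_succ]; exact ih _ _ j

theorem psiAux_mul : ∀ {n : ℕ} (g : G) (b : Fin n → G × G) (i : Fin n),
    (psiAux g b i).1 * (psiAux g b i).2 = (b i).1 * (b i).2 := by
  intro n
  induction n with
  | zero => intro g b i; exact i.elim0
  | succ n ih =>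
      intro g b i
      induction i using Fin.cases with
      | zero => rw [psiAux]; simp
      | succ j => rw [psiAux]; simp only [Fin.cons_succ]; exact ih _ _ j

theorem Pp_phiAux {n : ℕ} (g : G) (b : Fin n → G × G) : Pp (phiAux g b) = Pp b := by
  unfold Pp
  have : (fun i => (phiAux g b i).1 * (phiAux g b i).2)
      = fun i => (b i).1 * (b i).2 := funext fun i => phiAux_mul g b i
  rw [this]

theorem Pp_psiAux {n : ℕ} (g : G) (b : Fin n → G × G) : Pp (psiAux g b) = Pp b := by
  unfold Pp
  have : (fun i => (psiAux g b i).1 * (psiAux g b i).2)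
      = fun i => (b i).1 * (b i).2 := funext fun i => psiAux_mul g b i
  rw [this]

theorem Qr_phiAux : ∀ {n : ℕ} (g : G) (b : Fin n → G × G),
    Qr (phiAux g b) = g * Qf b * g⁻¹ := by
  intro n
  induction n with
  | zero =>
      intro g b
      simp [Qr, Qf, phiAux, List.ofFn_zero]
  | succ n ih =>
      intro g b
      unfold Qr Qf
      rw [List.ofFn_succ, List.ofFn_succ]
      rw [phiAux]
      simp only [Fin.cons_zero, Fin.cons_succ, List.reverse_cons, List.prod_append,
        List.prod_cons, List.prod_nil]
      have := ih (g * ((b 0).2 * (b 0).1)) (fun i => b i.succ)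
      unfold Qr Qf at this
      rw [this]
      group

theorem aux_congr {m : ℕ} (a : Fin m → G) {x y : ℕ} (hx : x < m) (hy : y < m)
    (h : x = y) : a ⟨x, hx⟩ = a ⟨y, hy⟩ := by subst h; rfl

theorem ofFn_two_cons (m : ℕ) (f : Fin (m + 2) → G) :
    (List.ofFn f).prod = f ⟨0, by omega⟩ * (f ⟨1, by omega⟩ *
      (List.ofFn fun i : Fin m => f ⟨i.val + 2, by have := i.isLt; omega⟩).prod) := by
  rw [List.ofFn_succ, List.ofFn_succ]
  simp only [List.prod_cons]
  rfl

theorem ofFn_two_cons_rev (m : ℕ) (f : Fin (m + 2) → G) :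
    (List.ofFn f).reverse.prod =
      (List.ofFn fun i : Fin m => f ⟨i.val + 2, by have := i.isLt; omega⟩).reverse.prod *
        (f ⟨1, by omega⟩ * f ⟨0, by omega⟩) := by
  rw [List.ofFn_succ, List.ofFn_succ]
  simp only [List.reverse_cons, List.prod_append, List.prod_cons, List.prod_nil]
  simp only [mul_one]
  exact mul_assoc _ _ _

theorem prod_eq_Pp : ∀ (n : ℕ) (a : Fin (2 * n) → G),
    (List.ofFn a).prod = Pp (myPair n a) := by
  intro n
  induction n with
  | zero => intro a; simp [Pp, List.ofFn_zero]
  | succ n ih =>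
      intro a
      refine (ofFn_two_cons (2 * n) a).trans ?_
      rw [ih (fun i : Fin (2 * n) => a ⟨i.val + 2, by have := i.isLt; omega⟩)]
      unfold Pp myPair
      rw [List.ofFn_succ, List.prod_cons, ← mul_assoc]
      congr 1

theorem revprod_eq_Qr : ∀ (n : ℕ) (a : Fin (2 * n) → G),
    (List.ofFn a).reverse.prod = Qr (myPair n a) := by
  intro n
  induction n with
  | zero => intro a; simp [Qr, List.ofFn_zero]
  | succ n ih =>
      intro a
      refine (ofFn_two_cons_rev (2 * n) a).trans ?_
      rw [ih (fun i : Fin (2 * n) => a ⟨i.val + 2, by have := i.isLt; omega⟩)]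
      unfold Qr myPair
      rw [List.ofFn_succ]
      simp only [List.reverse_cons, List.prod_append, List.prod_cons, List.prod_nil, mul_one]
      congr 1

end Aux

theorem stmt17 {G : Type*} [Group G] [Fintype G] (n : ℕ) (hn : 0 < n) :
    Nat.card {a : Fin (2 * n) → G //
        (List.ofFn a).prod = (List.ofFn a).reverse.prod} =
    Nat.card {a : Fin (2 * n) → G //
        (List.ofFn fun i : Fin n =>
            a ⟨2 * i.val, by have := i.isLt; omega⟩ *
            a ⟨2 * i.val + 1, by have := i.isLt; omega⟩).prod =
        (List.ofFn fun i : Fin n =>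
            a ⟨2 * i.val + 1, by have := i.isLt; omega⟩ *
            a ⟨2 * i.val, by have := i.isLt; omega⟩).prod} := by
  have hc2 : ∀ a : Fin (2 * n) → G,
      ((List.ofFn fun i : Fin n =>
            a ⟨2 * i.val, by have := i.isLt; omega⟩ *
            a ⟨2 * i.val + 1, by have := i.isLt; omega⟩).prod =
        (List.ofFn fun i : Fin n =>
            a ⟨2 * i.val + 1, by have := i.isLt; omega⟩ *
            a ⟨2 * i.val, by have := i.isLt; omega⟩).prod)
      ↔ (Pp (myPair n a) = Qf (myPair n a)) := fun a => Iff.rfl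
  have hc1 : ∀ a : Fin (2 * n) → G,
      ((List.ofFn a).prod = (List.ofFn a).reverse.prod)
      ↔ (Pp (myPair n a) = Qr (myPair n a)) := fun a => by
    rw [prod_eq_Pp, revprod_eq_Qr]
  refine (Nat.card_congr (Equiv.subtypeEquivRight hc1)).trans
    ((Nat.card_congr ?_).trans (Nat.card_congr (Equiv.subtypeEquivRight hc2)).symm)
  -- {a // Pp = Qr} ≃ {a // Pp = Qf}
  refine ⟨fun x => ⟨myUnpair n (psiAux 1 (myPair n x.1)), ?_⟩,
          fun y => ⟨myUnpair n (phiAux 1 (myPair n y.1)), ?_⟩, ?_, ?_⟩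
  · obtain ⟨a, h⟩ := x
    rw [myPair_myUnpair, Pp_psiAux]
    have h2 : Qr (phiAux 1 (psiAux 1 (myPair n a))) = 1 * Qf (psiAux 1 (myPair n a)) * 1⁻¹ :=
      Qr_phiAux 1 (psiAux (1 : G) (myPair n a))
    rw [phiAux_psiAux] at h2
    simp only [one_mul, inv_one, mul_one] at h2
    rw [h, h2]
  · obtain ⟨a, h⟩ := y
    rw [myPair_myUnpair, Pp_phiAux]
    have h2 : Qr (phiAux 1 (myPair n a)) = 1 * Qf (myPair n a) * 1⁻¹ := Qr_phiAux 1 _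
    simp only [one_mul, inv_one, mul_one] at h2
    rw [h2, h]
  · rintro ⟨a, h⟩
    apply Subtype.ext
    show myUnpair n (phiAux 1 (myPair n (myUnpair n (psiAux 1 (myPair n a))))) = a
    rw [myPair_myUnpair, phiAux_psiAux, myUnpair_myPair]
  · rintro ⟨a, h⟩
    apply Subtype.ext
    show myUnpair n (psiAux 1 (myPair n (myUnpair n (phiAux 1 (myPair n a))))) = a
    rw [myPair_myUnpair, psiAux_phiAux, myUnpair_myPair]
end
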